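/- Suppose e is even, write e' = e/2 and d' = ⌊d/2⌋. The number of partitions α in P_{d,e} with α^∨ = α (symmetric half partitions) equals the binomial coefficient C(d'+e', e'). -/
import Mathlib

section Aux

/-- Gap estimate for strictly monotone maps between `Fin` types. -/
lemma sm_gap {n m : ℕ} {γ : Fin n → Fin m} (hγ : StrictMono γ) :
    ∀ (a b : Fin n), a ≤ b → (γ a).val + (b.val - a.val) ≤ (γ b).val := by
  intro a b hab
  obtain ⟨t, ht⟩ : ∃ t, b.val = a.val + t := ⟨b.val - a.val, by
    have := Fin.le_def.mp hab; omega⟩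
  induction t generalizing b with
  | zero =>
      have : a = b := Fin.ext (by omega)
      subst this; omega
  | succ t ih =>
      have hb' : a.val + t < n := by omega
      have h1 := ih ⟨a.val + t, hb'⟩ (Fin.le_def.mpr (by simp only [Fin.val_mk]; omega))
        (by simp only [Fin.val_mk])
      have hlt : γ ⟨a.val + t, hb'⟩ < γ b := hγ (Fin.lt_def.mpr (by simp only [Fin.val_mk]; omega))
      have h2 := Fin.lt_def.mp hlt
      simp only [Fin.val_mk] at h1 h2
      omega

/-- Bounded antitone tuples correspond to strictly monotone tuples. -/
def antitoneEquivStrictMono (n k : ℕ) :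
    {β : Fin n → ℕ // (∀ i j : Fin n, i ≤ j → β j ≤ β i) ∧ ∀ i, β i ≤ k} ≃
      {γ : Fin n → Fin (n + k) // StrictMono γ} where
  toFun β := ⟨fun i => ⟨i.val + (k - β.1 i), by have := β.2.2 i; have := i.2; omega⟩, by
    intro i j hij
    have hle : β.1 j ≤ β.1 i := β.2.1 i j hij.le
    have hlt := Fin.lt_def.mp hij
    exact Fin.lt_def.mpr (by simp only [Fin.val_mk]; omega)⟩
  invFun γ := ⟨fun i => k - ((γ.1 i).val - i.val), by
    refine ⟨fun i j hij => ?_, fun i => ?_⟩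
    · have h1 := sm_gap γ.2 i j hij
      have h2 := Fin.le_def.mp hij
      dsimp only
      omega
    · dsimp only
      omega⟩
  left_inv := by
    rintro ⟨β, hanti, hbd⟩
    apply Subtype.ext
    funext i
    have := hbd i
    dsimp only
    omega
  right_inv := by
    rintro ⟨γ, hγ⟩
    apply Subtype.ext
    funext i
    apply Fin.ext
    have hpos : 0 < n := i.pos
    have hlow := sm_gap hγ ⟨0, hpos⟩ i (Fin.le_def.mpr (by simp only [Fin.val_mk]; omega))
    have hlast : n - 1 < n := by omega
    have hup := sm_gap hγ i ⟨n - 1, hlast⟩ (Fin.le_def.mpr (by simp only [Fin.val_mk]; omega))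
    have hb := (γ ⟨n - 1, hlast⟩).2
    have hiv := i.2
    dsimp only
    simp only [Fin.val_mk] at hlow hup ⊢
    omega

/-- Strictly monotone tuples correspond to subsets of fixed size. -/
def strictMonoEquivFinset (n m : ℕ) :
    {γ : Fin n → Fin m // StrictMono γ} ≃ {s : Finset (Fin m) // s.card = n} where
  toFun γ := ⟨Finset.univ.image γ.1, by
    rw [Finset.card_image_of_injective _ γ.2.injective, Finset.card_univ, Fintype.card_fin]⟩
  invFun s := ⟨(s.1.orderEmbOfFin s.2 : Fin n → Fin m), (s.1.orderEmbOfFin s.2).strictMono⟩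
  left_inv := by
    rintro ⟨γ, hγ⟩
    apply Subtype.ext
    exact (Finset.orderEmbOfFin_unique _ (fun x => Finset.mem_image_of_mem γ (Finset.mem_univ x))
      hγ).symm
  right_inv := by
    rintro ⟨s, hs⟩
    apply Subtype.ext
    rw [← Finset.coe_inj, Finset.coe_image, Finset.coe_univ, Set.image_univ,
      Finset.range_orderEmbOfFin]

/-- Reconstruction of a symmetric partition from its first half. -/
def recon (d e' : ℕ) (β : Fin (d / 2) → ℕ) : Fin d → ℕ := fun i =>
  if h1 : i.val < d / 2 then β ⟨i.val, h1⟩ + e'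
  else if h2 : d - 1 - i.val < d / 2 then e' - β ⟨d - 1 - i.val, h2⟩
  else e'

lemma recon_lo {d e' : ℕ} (β : Fin (d / 2) → ℕ) {i : Fin d} {v : ℕ}
    (hv : i.val = v) (p : v < d / 2) : recon d e' β i = β ⟨v, p⟩ + e' := by
  subst hv; exact dif_pos p

lemma recon_hi {d e' : ℕ} (β : Fin (d / 2) → ℕ) {i : Fin d} {v : ℕ}
    (hv : d - 1 - i.val = v) (p1 : ¬ i.val < d / 2) (p2 : v < d / 2) :
    recon d e' β i = e' - β ⟨v, p2⟩ := by
  subst hv; unfold recon; rw [dif_neg p1, dif_pos p2]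

lemma recon_mid {d e' : ℕ} (β : Fin (d / 2) → ℕ) {i : Fin d}
    (p1 : ¬ i.val < d / 2) (p2 : ¬ d - 1 - i.val < d / 2) : recon d e' β i = e' := by
  unfold recon; rw [dif_neg p1, dif_neg p2]

/-- Symmetric partitions correspond to their bounded antitone first halves. -/
def symEquivHalf (d e' : ℕ) :
    {α : Fin d → ℕ //
        (∀ i j : Fin d, i ≤ j → α j ≤ α i) ∧ (∀ i, α i ≤ 2 * e') ∧
        (∀ i, 2 * e' - α (Fin.rev i) = α i)} ≃
      {β : Fin (d / 2) → ℕ // (∀ i j : Fin (d / 2), i ≤ j → β j ≤ β i) ∧ ∀ i, β i ≤ e'} where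
  toFun α := ⟨fun i => α.1 ⟨i.val, lt_of_lt_of_le i.2 (Nat.div_le_self d 2)⟩ - e', by
    obtain ⟨α, hmono, hbd, hsym⟩ := α
    refine ⟨fun i j hij => ?_, fun i => ?_⟩
    · have := hmono ⟨i.val, lt_of_lt_of_le i.2 (Nat.div_le_self d 2)⟩
        ⟨j.val, lt_of_lt_of_le j.2 (Nat.div_le_self d 2)⟩ (Fin.le_def.mpr (Fin.le_def.mp hij))
      dsimp only
      omega
    · have := hbd ⟨i.val, lt_of_lt_of_le i.2 (Nat.div_le_self d 2)⟩
      dsimp only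
      omega⟩
  invFun β := ⟨recon d e' β.1, by
    obtain ⟨β, hanti, hbd⟩ := β
    refine ⟨?_, ?_, ?_⟩
    · -- antitone
      intro i j hij
      have hij' := Fin.le_def.mp hij
      have hjv := j.2
      have hiv := i.2
      dsimp only
      rcases Nat.lt_or_ge i.val (d / 2) with hi | hi
      · rcases Nat.lt_or_ge j.val (d / 2) with hj | hj
        · rw [recon_lo β (i := i) rfl hi, recon_lo β (i := j) rfl hj]
          have := hanti ⟨i.val, hi⟩ ⟨j.val, hj⟩
            (Fin.le_def.mpr (by simp only [Fin.val_mk]; omega))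
          omega
        · rcases Nat.lt_or_ge (d - 1 - j.val) (d / 2) with hj2 | hj2
          · rw [recon_lo β (i := i) rfl hi, recon_hi β (i := j) rfl (by omega) hj2]
            omega
          · rw [recon_lo β (i := i) rfl hi, recon_mid β (i := j) (by omega) (by omega)]
            omega
      · have hj : d / 2 ≤ j.val := le_trans hi hij'
        rcases Nat.lt_or_ge (d - 1 - i.val) (d / 2) with hi2 | hi2
        · have hj2 : d - 1 - j.val < d / 2 := by omega
          rw [recon_hi β (i := i) rfl (by omega) hi2, recon_hi β (i := j) rfl (by omega) hj2]
          have := hanti ⟨d - 1 - j.val, hj2⟩ ⟨d - 1 - i.val, hi2⟩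
            (Fin.le_def.mpr (by simp only [Fin.val_mk]; omega))
          omega
        · rw [recon_mid β (i := i) (by omega) (by omega)]
          rcases Nat.lt_or_ge (d - 1 - j.val) (d / 2) with hj2 | hj2
          · rw [recon_hi β (i := j) rfl (by omega) hj2]
            omega
          · rw [recon_mid β (i := j) (by omega) (by omega)]
    · -- bound
      intro i
      have hiv := i.2
      dsimp only
      rcases Nat.lt_or_ge i.val (d / 2) with hi | hi
      · rw [recon_lo β (i := i) rfl hi]
        have := hbd ⟨i.val, hi⟩
        omega
      · rcases Nat.lt_or_ge (d - 1 - i.val) (d / 2) with hi2 | hi2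
        · rw [recon_hi β (i := i) rfl (by omega) hi2]
          omega
        · rw [recon_mid β (i := i) (by omega) (by omega)]
          omega
    · -- symmetry
      intro i
      have hiv := i.2
      have hrev : (Fin.rev i).val = d - 1 - i.val := by
        simp only [Fin.val_rev]; omega
      dsimp only
      rcases Nat.lt_or_ge i.val (d / 2) with hi | hi
      · rw [recon_hi β (i := Fin.rev i) (v := i.val) (by omega) (by omega) hi,
          recon_lo β (i := i) rfl hi]
        have := hbd ⟨i.val, hi⟩
        omega
      · rcases Nat.lt_or_ge (d - 1 - i.val) (d / 2) with hi2 | hi2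
        · rw [recon_lo β (i := Fin.rev i) (v := d - 1 - i.val) (by omega) hi2,
            recon_hi β (i := i) rfl (by omega) hi2]
          have := hbd ⟨d - 1 - i.val, hi2⟩
          omega
        · rw [recon_mid β (i := Fin.rev i) (by omega) (by omega),
            recon_mid β (i := i) (by omega) (by omega)]
          omega⟩
  left_inv := by
    rintro ⟨α, hmono, hbd, hsym⟩
    apply Subtype.ext
    funext i
    have hiv := i.2
    have hsum : ∀ j : Fin d, α j + α (Fin.rev j) = 2 * e' := fun j => by
      have := hsym j; have := hbd (Fin.rev j); omega
    have hrev : (Fin.rev i).val = d - 1 - i.val := by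
      simp only [Fin.val_rev]; omega
    have hrevle : ∀ j k : Fin d, j.val ≤ k.val → α k ≤ α j := fun j k h =>
      hmono j k (Fin.le_def.mpr h)
    dsimp only
    rcases Nat.lt_or_ge i.val (d / 2) with hi | hi
    · rw [recon_lo _ (i := i) rfl hi]
      dsimp only
      have he : (⟨(⟨i.val, hi⟩ : Fin (d / 2)).val,
          lt_of_lt_of_le (⟨i.val, hi⟩ : Fin (d / 2)).2 (Nat.div_le_self d 2)⟩ : Fin d) = i :=
        Fin.ext (by simp only [Fin.val_mk])
      rw [he]
      have hle : α (Fin.rev i) ≤ α i := hrevle i (Fin.rev i) (by omega)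
      have := hsum i
      omega
    · rcases Nat.lt_or_ge (d - 1 - i.val) (d / 2) with hi2 | hi2
      · rw [recon_hi _ (i := i) rfl (by omega) hi2]
        dsimp only
        have he : (⟨(⟨d - 1 - i.val, hi2⟩ : Fin (d / 2)).val,
            lt_of_lt_of_le (⟨d - 1 - i.val, hi2⟩ : Fin (d / 2)).2 (Nat.div_le_self d 2)⟩ : Fin d)
            = Fin.rev i := Fin.ext (by simp only [Fin.val_mk]; omega)
        rw [he]
        have hle : α i ≤ α (Fin.rev i) := hrevle (Fin.rev i) i (by omega)
        have := hsum i
        omega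
      · rw [recon_mid _ (i := i) (by omega) (by omega)]
        have hmid : Fin.rev i = i := Fin.ext (by omega)
        have := hsum i
        rw [hmid] at this
        omega
  right_inv := by
    rintro ⟨β, hanti, hbd⟩
    apply Subtype.ext
    funext i
    have hiv := i.2
    dsimp only
    rw [recon_lo β (v := i.val) (by simp only [Fin.val_mk]) hiv]
    simp only [Fin.eta]
    omega

end Aux

/-- For `e = 2 * e'` even and `d' = ⌊d/2⌋`, the number of symmetric half partitions in
the `d × e` frame (partitions fixed by the duality `α ↦ α^∨`) is `C(d' + e', e')`. -/
theorem number_of_symmetric_half_partitions (d e' : ℕ) :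
    Nat.card {α : Fin d → ℕ //
        (∀ i j : Fin d, i ≤ j → α j ≤ α i) ∧ (∀ i, α i ≤ 2 * e') ∧
        (∀ i, 2 * e' - α (Fin.rev i) = α i)} =
      (d / 2 + e').choose e' := by
  rw [Nat.card_congr (((symEquivHalf d e').trans (antitoneEquivStrictMono (d / 2) e')).trans
    (strictMonoEquivFinset (d / 2) (d / 2 + e')))]
  rw [Nat.card_eq_fintype_card, Fintype.card_finset_len, Fintype.card_fin]
  exact Nat.choose_symm_add
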